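/- Let (V,ω) be a symplectic vector space of dimension n, with dual bases {e_i} of V and {e^i} of V*. For p ≥ 2, the map φ_p^ω: Λ^p V* ⊗ V → Λ^{p−1}V* ⊗ Λ²V* defined by φ_p^ω(α⊗X) = (−1)^{p−1} Σ_i ι_{e_i}(α) ⊗ e^i ∧ ι_X ω is injective; for p = 2 it is an isomorphism. -/
import Mathlib


/-- for a symplectic vector space `(V,ω)` the map
`φ_p^ω : Λ^p V* ⊗ V → Λ^{p−1}V* ⊗ Λ²V*`, described invariantly on
`ψ ∈ Hom(Λ^p V, V)` by `φ_p^ω(ψ)(v₁,…,v_{p−1}) = ψ(v₁,…,v_{p−1},−)·ω`, is injective for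
`p ≥ 2`, and for `p = 2` it is moreover an isomorphism (i.e. also surjective onto the
maps `V → Λ²V*`). -/
theorem phiOmega_injective_and_two_bijective
    {V : Type*} [AddCommGroup V] [Module ℝ V] [FiniteDimensional ℝ V]
    (ω : V →ₗ[ℝ] V →ₗ[ℝ] ℝ)
    (hskew : ∀ x y : V, ω x y = -ω y x)
    (hnondeg : ∀ x : V, (∀ y : V, ω x y = 0) → x = 0) :
    (∀ (k : ℕ) (ψ : V [⋀^Fin (k + 2)]→ₗ[ℝ] V),
      (∀ (v : Fin (k + 1) → V) (x y : V),
        ω (ψ (Fin.snoc v x)) y + ω x (ψ (Fin.snoc v y)) = 0) → ψ = 0) ∧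
    (∀ T : V →ₗ[ℝ] V →ₗ[ℝ] V →ₗ[ℝ] ℝ,
      (∀ v x y : V, T v x y = -T v y x) →
      ∃ ψ : V [⋀^Fin 2]→ₗ[ℝ] V,
        ∀ v x y : V, ω (ψ ![v, x]) y + ω x (ψ ![v, y]) = T v x y) := by
  constructor
  · intro k ψ hψ
    have hsym : ∀ (u : Fin (k+1) → V) (x y : V),
        ω (ψ (Fin.snoc u x)) y = ω (ψ (Fin.snoc u y)) x := by
      intro u x y
      have h1 := hψ u x y
      have h2 := hskew x (ψ (Fin.snoc u y))
      linarith
    have hanti : ∀ (u : Fin k → V) (a b : V),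
        ψ (Fin.snoc (Fin.snoc u a) b) = - ψ (Fin.snoc (Fin.snoc u b) a) := by
      intro u a b
      have hne : (Fin.castSucc (Fin.last k)) ≠ Fin.last (k+1) := by
        simp [Fin.ext_iff]
      have h := ψ.map_swap (Fin.snoc (Fin.snoc u b) a) hne
      have heq : (Fin.snoc (Fin.snoc u b) a) ∘
          Equiv.swap (Fin.castSucc (Fin.last k)) (Fin.last (k+1))
          = Fin.snoc (Fin.snoc u a) b := by
        funext m
        induction m using Fin.lastCases with
        | last => simp [Equiv.swap_apply_right]
        | cast m =>
          induction m using Fin.lastCases with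
          | last => simp [Equiv.swap_apply_left]
          | cast m =>
            have h1 : Fin.castSucc (Fin.castSucc m) ≠ Fin.castSucc (Fin.last k) := by
              simp [Fin.ext_iff]; omega
            have h2 : Fin.castSucc (Fin.castSucc m) ≠ Fin.last (k+1) := by
              simp [Fin.ext_iff]; omega
            simp [Equiv.swap_apply_of_ne_of_ne h1 h2]
      rw [heq] at h
      rw [h]
    have key : ∀ (u : Fin k → V) (a b c : V),
        ω (ψ (Fin.snoc (Fin.snoc u a) b)) c = 0 := by
      intro u a b c
      set S : V → V → V → ℝ := fun a b c => ω (ψ (Fin.snoc (Fin.snoc u a) b)) c with hS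
      have hS1 : ∀ a b c, S a b c = - S b a c := by
        intro a b c
        simp only [hS, hanti u a b, map_neg, LinearMap.neg_apply]
      have hS2 : ∀ a b c, S a b c = S a c b := by
        intro a b c
        exact hsym (Fin.snoc u a) b c
      have : S a b c = - S a b c := by
        calc S a b c = S a c b := hS2 a b c
          _ = - S c a b := hS1 a c b
          _ = - S c b a := by rw [hS2 c a b]
          _ = S b c a := by rw [hS1 b c a]
          _ = S b a c := hS2 b c a
          _ = - S a b c := hS1 b a c
      have : S a b c = 0 := by linarith
      exact this
    have key2 : ∀ (u : Fin (k+1) → V) (x : V), ψ (Fin.snoc u x) = 0 := by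
      intro u x
      apply hnondeg
      intro y
      have := key (Fin.init u) (u (Fin.last k)) x y
      rwa [Fin.snoc_init_self] at this
    ext w
    have := key2 (Fin.init w) (w (Fin.last (k+1)))
    rwa [Fin.snoc_init_self] at this
  · intro T hT
    have hinj : Function.Injective ω := by
      rw [← LinearMap.ker_eq_bot, LinearMap.ker_eq_bot']
      intro x hx
      exact hnondeg x fun y => congrFun (congrArg _ hx) y
    have hsurj : Function.Surjective ω :=
      (LinearMap.injective_iff_surjective_of_finrank_eq_finrank
        (Subspace.dual_finrank_eq).symm).mp hinj
    let e : V ≃ₗ[ℝ] Module.Dual ℝ V := LinearEquiv.ofBijective ω ⟨hinj, hsurj⟩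
    -- the trilinear map A v x = ½ (T v x + (y ↦ T x y v) − (y ↦ T y v x)) as a dual element
    let A : V → V → Module.Dual ℝ V := fun v x =>
      (1/2 : ℝ) • (T v x + (T x).flip v -
        ((LinearMap.applyₗ x).comp ((LinearMap.applyₗ v).comp T)))
    have hA : ∀ v x y, A v x y = (1/2 : ℝ) * (T v x y + T x y v - T y v x) := by
      intro v x y
      simp [A, mul_sub, mul_add]
    let B : V → V → V := fun v x => e.symm (A v x)
    have hB : ∀ v x y, ω (B v x) y = (1/2 : ℝ) * (T v x y + T x y v - T y v x) := by
      intro v x y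
      have : ω (B v x) = A v x := e.apply_symm_apply (A v x)
      rw [show ω (B v x) y = (ω (B v x) : Module.Dual ℝ V) y from rfl, this, hA]
    have hBvv : ∀ v, B v v = 0 := by
      intro v
      apply hinj
      apply LinearMap.ext
      intro y
      rw [hB]
      have h1 : T v v y = - T v y v := hT v v y
      have h2 : T y v v = - T y v v := hT y v v
      simp only [map_zero, LinearMap.zero_apply]
      linarith
    have hBadd1 : ∀ v w x, B (v + w) x = B v x + B w x := by
      intro v w x
      apply hinj; apply LinearMap.ext; intro y
      simp only [map_add, LinearMap.add_apply, hB]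
      ring
    have hBadd2 : ∀ v x w, B v (x + w) = B v x + B v w := by
      intro v x w
      apply hinj; apply LinearMap.ext; intro y
      simp only [map_add, LinearMap.add_apply, hB]
      ring
    have hBsmul1 : ∀ (c : ℝ) v x, B (c • v) x = c • B v x := by
      intro c v x
      apply hinj; apply LinearMap.ext; intro y
      simp only [map_smul, LinearMap.smul_apply, smul_eq_mul, hB]
      ring
    have hBsmul2 : ∀ (c : ℝ) v x, B v (c • x) = c • B v x := by
      intro c v x
      apply hinj; apply LinearMap.ext; intro y
      simp only [map_smul, LinearMap.smul_apply, smul_eq_mul, hB]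
      ring
    let ψ : V [⋀^Fin 2]→ₗ[ℝ] V :=
      { toFun := fun w => B (w 0) (w 1)
        map_update_add' := by
          intro _ m i x y
          fin_cases i <;>
            simp [Function.update_apply, Fin.ext_iff, hBadd1, hBadd2]
        map_update_smul' := by
          intro _ m i c x
          fin_cases i <;>
            simp [Function.update_apply, Fin.ext_iff, hBsmul1, hBsmul2]
        map_eq_zero_of_eq' := by
          intro w i j hij hne
          have h01 : w 0 = w 1 := by
            fin_cases i <;> fin_cases j <;>
              first
                | exact absurd rfl hne
                | exact hij
                | exact hij.symm
          show B (w 0) (w 1) = 0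
          rw [h01, hBvv]
      }
    refine ⟨ψ, fun v x y => ?_⟩
    have hψ : ∀ a b : V, ψ ![a, b] = B a b := by intro a b; rfl
    rw [hψ, hψ, hskew x (B v y), hB, hB]
    have h1 : T v y x = - T v x y := hT v y x
    have h2 : T y x v = - T y v x := hT y x v
    have h3 : T x y v = - T x v y := hT x y v
    linarith
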